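/- For all sufficiently large N the following holds. Let Ĥ = Ĥ(m₀; m₁, m₂, 0) be the graph on vertex set W partitioned into disjoint sets Z₀, Z₁, Z₂ of sizes m₀, m₁, m₂, whose edges are all pairs of vertices in two different parts together with all pairs inside Z₀. Let J be a b'-dense subgraph of Ĥ where b' ≤ N/8 − 6√N, and suppose (i) m₀ + m₁ + m₂ ≤ N, (ii) m₀ + m₁/2 + m₂ ≥ 3N/4, (iii) m₂ ≤ N/4, and (iv) m₀ > N/2 − m₂ ≥ N/4. Suppose the edges of J are coloured with two colours and that in one of the colours there is a union F'₂ = (V'₂, E'₂) of connected components of that colour such that |W \ V'₂| ≥ N/4 and V'₂ ∩ Z₀ ≠ ∅. Then all vertices of V'₂ ∩ Z₀ are contained in one connected component F₃ = (V₃, E₃) of the other colour, and |Z₀ \ V₃| ≤ N/8. -/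

import Mathlib

open SimpleGraph

/-- The graph Ĥ(m₀; m₁, m₂, 0) on a vertex set partitioned into parts `Z 0, Z 1, Z 2`:
its edges are all pairs of vertices lying in two different parts together with all pairs
inside `Z 0`. -/
def hatH3 {V : Type*} (Z : Fin 3 → Set V) : SimpleGraph V where
  Adj u v := u ≠ v ∧ ((u ∈ Z 0 ∧ v ∈ Z 0) ∨ ∃ i j : Fin 3, i ≠ j ∧ u ∈ Z i ∧ v ∈ Z j)
  symm := by
    constructor
    rintro u v ⟨hne, h⟩
    refine ⟨hne.symm, ?_⟩
    rcases h with ⟨h1, h2⟩ | ⟨i, j, hij, hi, hj⟩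
    · exact Or.inl ⟨h2, h1⟩
    · exact Or.inr ⟨j, i, hij.symm, hj, hi⟩
  loopless := ⟨fun v h => h.1 rfl⟩

/-- The subgraph of `J` spanned by the edges of colour `i` under the 2-edge-colouring `c`. -/
def colourGraph2 {V : Type*} (J : SimpleGraph V) (c : Sym2 V → Fin 2) (i : Fin 2) :
    SimpleGraph V where
  Adj u v := J.Adj u v ∧ c s(u, v) = i
  symm := ⟨fun u v h => ⟨h.1.symm, by rw [Sym2.eq_swap]; exact h.2⟩⟩
  loopless := ⟨fun v h => J.loopless.irrefl v h.1⟩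

/-- Claim 9 of the paper: with the setup of Lemma 8 (m₃ = 0), if in one of the two colours
there is a union F'₂ of components with |W \ V'₂| ≥ N/4 and V'₂ ∩ Z₀ ≠ ∅, then all
vertices of V'₂ ∩ Z₀ lie in one component K₃ of the other colour, and |Z₀ \ V₃| ≤ N/8. -/
theorem stmt18 :
    ∃ N₀ : ℕ, ∀ N : ℕ, N₀ ≤ N →
      ∀ (V : Type) [Fintype V], ∀ (Z : Fin 3 → Set V) (m : Fin 3 → ℕ) (b' : ℝ),
        (⋃ i, Z i) = Set.univ →
        (∀ i j : Fin 3, i ≠ j → Disjoint (Z i) (Z j)) →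
        (∀ i, (Z i).ncard = m i) →
        b' ≤ (N : ℝ) / 8 - 6 * Real.sqrt N →
        ∀ J : SimpleGraph V, J ≤ hatH3 Z →
          (∀ v : V, (((hatH3 Z).neighborSet v).ncard : ℝ) < (J.neighborSet v).ncard + b') →
          m 0 + m 1 + m 2 ≤ N →
          3 * (N : ℝ) / 4 ≤ (m 0 : ℝ) + (m 1 : ℝ) / 2 + m 2 →
          (m 2 : ℝ) ≤ (N : ℝ) / 4 →
          ((N : ℝ) / 2 - m 2 < m 0 ∧ (N : ℝ) / 4 ≤ (N : ℝ) / 2 - m 2) →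
          ∀ c : Sym2 V → Fin 2, ∀ i j : Fin 2, i ≠ j →
            ∀ (𝒦 : Set ((colourGraph2 J c i).ConnectedComponent)) (V₂' : Set V),
              V₂' = ⋃ K ∈ 𝒦, K.supp →
              (N : ℝ) / 4 ≤ ((V₂'ᶜ).ncard : ℝ) →
              (V₂' ∩ Z 0).Nonempty →
              ∃ K₃ : (colourGraph2 J c j).ConnectedComponent,
                V₂' ∩ Z 0 ⊆ K₃.supp ∧ ((Z 0 \ K₃.supp).ncard : ℝ) ≤ (N : ℝ) / 8 := by
  classical
  refine ⟨1, ?_⟩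
  intro N hN V _ Z m b' hcover hdisj hcard hb' J hJle hdense hm1 hm2 hm3 hm4 c i j hij
    𝒦 V₂' hV₂' hVc hne
  -- sqrt N ≥ 1
  have hsqrt1 : (1 : ℝ) ≤ Real.sqrt N := by
    rw [show (1:ℝ) = Real.sqrt 1 by simp]
    exact Real.sqrt_le_sqrt (by exact_mod_cast hN)
  have hsqrt0 : (0 : ℝ) ≤ Real.sqrt N := Real.sqrt_nonneg _
  -- missing-edge sets
  set M : V → Set V := fun v => (hatH3 Z).neighborSet v \ J.neighborSet v with hMdef
  have hMlt : ∀ v, ((M v).ncard : ℝ) < b' := by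
    intro v
    have hsub : J.neighborSet v ⊆ (hatH3 Z).neighborSet v := fun u hu => hJle hu
    have h1 : (M v).ncard = ((hatH3 Z).neighborSet v).ncard - (J.neighborSet v).ncard :=
      Set.ncard_diff hsub (Set.toFinite _)
    have h2 : (J.neighborSet v).ncard ≤ ((hatH3 Z).neighborSet v).ncard :=
      Set.ncard_le_ncard hsub (Set.toFinite _)
    have := hdense v
    rw [h1]
    push_cast [Nat.cast_sub h2]
    linarith
  -- Z 0 vertices are adjacent to everything else in hatH3
  have hadj0 : ∀ v ∈ Z 0, ∀ u : V, u ≠ v → (hatH3 Z).Adj v u := by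
    intro v hv u hu
    refine ⟨hu.symm, ?_⟩
    have humem : u ∈ ⋃ k, Z k := by rw [hcover]; exact Set.mem_univ u
    obtain ⟨k, hk⟩ := Set.mem_iUnion.1 humem
    by_cases hk0 : k = 0
    · exact Or.inl ⟨hv, hk0 ▸ hk⟩
    · exact Or.inr ⟨0, k, Ne.symm hk0, hv, hk⟩
  -- colour-i edges from V₂' stay in V₂'
  have hA : ∀ v ∈ V₂', ∀ u : V, (colourGraph2 J c i).Adj v u → u ∈ V₂' := by
    intro v hv u hadj
    rw [hV₂'] at hv ⊢
    obtain ⟨K, hK, hvK⟩ := Set.mem_iUnion₂.1 hv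
    have hmk : (colourGraph2 J c i).connectedComponentMk u = K := by
      rw [← (SimpleGraph.ConnectedComponent.mem_supp_iff _ _).1 hvK]
      exact SimpleGraph.ConnectedComponent.sound hadj.symm.reachable
    exact Set.mem_iUnion₂.2 ⟨K, hK, (SimpleGraph.ConnectedComponent.mem_supp_iff _ _).2 hmk⟩
  have hcol : ∀ x : Fin 2, x ≠ i → x = j := by
    have h : ∀ x a b : Fin 2, a ≠ b → x ≠ a → x = b := by decide
    exact fun x hx => h x i j hij hx
  -- J-edges from V₂' to outside V₂' are colour j
  have hB : ∀ v ∈ V₂', ∀ u : V, u ∉ V₂' → J.Adj v u → (colourGraph2 J c j).Adj v u := by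
    intro v hv u hu hJadj
    refine ⟨hJadj, hcol _ ?_⟩
    intro hci
    exact hu (hA v hv u ⟨hJadj, hci⟩)
  obtain ⟨v₀, hv₀⟩ := hne
  -- part 1: every v ∈ V₂' ∩ Z 0 is in the colour-j component of v₀
  have hpart1 : ∀ v ∈ V₂' ∩ Z 0,
      (colourGraph2 J c j).connectedComponentMk v
        = (colourGraph2 J c j).connectedComponentMk v₀ := by
    intro v hv
    set S : Set V := V₂'ᶜ ∩ (J.neighborSet v ∩ J.neighborSet v₀) with hSdef
    have hsub : V₂'ᶜ ⊆ S ∪ (M v ∪ M v₀) := by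
      intro u hu
      have huv : u ≠ v := fun h => hu (h ▸ hv.1)
      have huv₀ : u ≠ v₀ := fun h => hu (h ▸ hv₀.1)
      have ha1 : (hatH3 Z).Adj v u := hadj0 v hv.2 u huv
      have ha2 : (hatH3 Z).Adj v₀ u := hadj0 v₀ hv₀.2 u huv₀
      by_cases h1 : J.Adj v u
      · by_cases h2 : J.Adj v₀ u
        · exact Or.inl ⟨hu, h1, h2⟩
        · exact Or.inr (Or.inr ⟨ha2, h2⟩)
      · exact Or.inr (Or.inl ⟨ha1, h1⟩)
    have hcount : (V₂'ᶜ).ncard ≤ S.ncard + ((M v).ncard + (M v₀).ncard) := by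
      calc (V₂'ᶜ).ncard ≤ (S ∪ (M v ∪ M v₀)).ncard :=
            Set.ncard_le_ncard hsub (Set.toFinite _)
        _ ≤ S.ncard + (M v ∪ M v₀).ncard := Set.ncard_union_le _ _
        _ ≤ S.ncard + ((M v).ncard + (M v₀).ncard) := by
            exact Nat.add_le_add_left (Set.ncard_union_le _ _) _
    have hSpos : (0 : ℝ) < (S.ncard : ℝ) := by
      have h1 := hMlt v
      have h2 := hMlt v₀
      have : ((V₂'ᶜ).ncard : ℝ) ≤ (S.ncard : ℝ) + ((M v).ncard + (M v₀).ncard) := by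
        exact_mod_cast hcount
      nlinarith
    have hSne : S.Nonempty := by
      apply Set.nonempty_of_ncard_ne_zero
      exact_mod_cast hSpos.ne'
    obtain ⟨u, hu, h1, h2⟩ := hSne
    have e1 : (colourGraph2 J c j).Adj v u := hB v hv.1 u hu h1
    have e2 : (colourGraph2 J c j).Adj v₀ u := hB v₀ hv₀.1 u hu h2
    calc (colourGraph2 J c j).connectedComponentMk v
        = (colourGraph2 J c j).connectedComponentMk u :=
          SimpleGraph.ConnectedComponent.sound e1.reachable
      _ = (colourGraph2 J c j).connectedComponentMk v₀ :=
          SimpleGraph.ConnectedComponent.sound e2.symm.reachable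
  refine ⟨(colourGraph2 J c j).connectedComponentMk v₀, ?_, ?_⟩
  · intro v hv
    exact (SimpleGraph.ConnectedComponent.mem_supp_iff _ _).2 (hpart1 v hv)
  · set K₃ := (colourGraph2 J c j).connectedComponentMk v₀ with hK₃
    have hv₀supp : v₀ ∈ K₃.supp := (SimpleGraph.ConnectedComponent.mem_supp_iff _ _).2 rfl
    have hD : Z 0 \ K₃.supp ⊆ M v₀ := by
      rintro w ⟨hw0, hwK⟩
      have hwv₀ : w ≠ v₀ := fun h => hwK (h ▸ hv₀supp)
      have hadj : (hatH3 Z).Adj v₀ w := hadj0 v₀ hv₀.2 w hwv₀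
      refine ⟨hadj, ?_⟩
      intro hJadj
      by_cases hwV : w ∈ V₂'
      · exact hwK ((SimpleGraph.ConnectedComponent.mem_supp_iff _ _).2 (hpart1 w ⟨hwV, hw0⟩))
      · have := hB v₀ hv₀.1 w hwV hJadj
        exact hwK ((SimpleGraph.ConnectedComponent.mem_supp_iff _ _).2
          (SimpleGraph.ConnectedComponent.sound this.symm.reachable))
    have hle : (Z 0 \ K₃.supp).ncard ≤ (M v₀).ncard :=
      Set.ncard_le_ncard hD (Set.toFinite _)
    have := hMlt v₀
    have hle' : ((Z 0 \ K₃.supp).ncard : ℝ) ≤ ((M v₀).ncard : ℝ) := by exact_mod_cast hle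
    nlinarith
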